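/- In a triangle ABC all of whose angles are less than 120°, there exists a unique interior point M such that each of the angles ∠AMB, ∠BMC, ∠CMA equals 120°. -/

import Mathlib

open EuclideanGeometry Real Filter Topology Set

namespace FermatAux

variable {E : Type*} [NormedAddCommGroup E] [InnerProductSpace ℝ E]

local notation "⟪" x ", " y "⟫" => @inner ℝ _ _ x y

noncomputable def f (A B C x : E) : ℝ := dist x A + dist x B + dist x C

lemma dist_sq_expand (M Q w : E) (t : ℝ) :
    dist (M + t • w) Q ^ 2 - dist M Q ^ 2 = 2 * t * ⟪M - Q, w⟫ + t ^ 2 * ‖w‖ ^ 2 := by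
  rw [dist_eq_norm, dist_eq_norm]
  have h : M + t • w - Q = (M - Q) + t • w := by abel
  rw [h, norm_add_sq_real (M - Q) (t • w), real_inner_smul_right, norm_smul]
  simp only [Real.norm_eq_abs, mul_pow, sq_abs]
  ring

lemma tendsto_quot_ne (M Q w : E) (h : M ≠ Q) :
    Tendsto (fun t : ℝ => (dist (M + t • w) Q - dist M Q) / t) (𝓝[>] 0)
      (𝓝 (⟪M - Q, w⟫ / dist M Q)) := by
  have hd : (0:ℝ) < dist M Q := dist_pos.2 h
  have hcont : Tendsto (fun t : ℝ => (2 * ⟪M - Q, w⟫ + t * ‖w‖ ^ 2)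
      / (dist (M + t • w) Q + dist M Q)) (𝓝 0) (𝓝 (⟪M - Q, w⟫ / dist M Q)) := by
    have h1 : Tendsto (fun t : ℝ => dist (M + t • w) Q + dist M Q) (𝓝 0)
        (𝓝 (2 * dist M Q)) := by
      have hc : Continuous fun t : ℝ => dist (M + t • w) Q + dist M Q := by continuity
      have h0 := hc.tendsto 0
      simpa [two_mul] using h0
    have h2 : Tendsto (fun t : ℝ => 2 * ⟪M - Q, w⟫ + t * ‖w‖ ^ 2) (𝓝 0)
        (𝓝 (2 * ⟪M - Q, w⟫)) := by
      have hc : Continuous fun t : ℝ => 2 * ⟪M - Q, w⟫ + t * ‖w‖ ^ 2 := by continuity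
      simpa using hc.tendsto 0
    have h3 := h2.div h1 (by positivity)
    have he : (2 * ⟪M - Q, w⟫) / (2 * dist M Q) = ⟪M - Q, w⟫ / dist M Q := by
      rw [mul_div_mul_left _ _ (two_ne_zero)]
    rwa [he] at h3
  refine tendsto_nhdsWithin_congr (f := fun t : ℝ => (2 * ⟪M - Q, w⟫ + t * ‖w‖ ^ 2)
      / (dist (M + t • w) Q + dist M Q)) ?_ (hcont.mono_left nhdsWithin_le_nhds)
  intro t ht
  have ht0 : (0:ℝ) < t := ht
  have hden : (0:ℝ) < dist (M + t • w) Q + dist M Q := by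
    have := dist_nonneg (x := M + t • w) (y := Q); linarith
  have key := dist_sq_expand M Q w t
  rw [div_eq_div_iff hden.ne' ht0.ne']
  nlinarith [key]

lemma tendsto_quot_self (M w : E) :
    Tendsto (fun t : ℝ => (dist (M + t • w) M - dist M M) / t) (𝓝[>] 0) (𝓝 ‖w‖) := by
  refine tendsto_nhdsWithin_congr (f := fun _ : ℝ => ‖w‖) ?_ tendsto_const_nhds
  intro t ht
  have ht0 : (0:ℝ) < t := ht
  have : dist (M + t • w) M = t * ‖w‖ := by
    rw [dist_eq_norm]
    have h : M + t • w - M = t • w := by abel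
    rw [h, norm_smul, Real.norm_eq_abs, abs_of_pos ht0]
  rw [this, dist_self]
  field_simp
  ring

lemma descent {A B C M w : E} {cA cB cC : ℝ}
    (hA : Tendsto (fun t : ℝ => (dist (M + t • w) A - dist M A) / t) (𝓝[>] 0) (𝓝 cA))
    (hB : Tendsto (fun t : ℝ => (dist (M + t • w) B - dist M B) / t) (𝓝[>] 0) (𝓝 cB))
    (hC : Tendsto (fun t : ℝ => (dist (M + t • w) C - dist M C) / t) (𝓝[>] 0) (𝓝 cC))
    (hneg : cA + cB + cC < 0) :
    ∃ x : E, f A B C x < f A B C M := by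
  have hsum : Tendsto (fun t : ℝ => (f A B C (M + t • w) - f A B C M) / t) (𝓝[>] 0)
      (𝓝 (cA + cB + cC)) := by
    have h := (hA.add hB).add hC
    refine h.congr (fun t => ?_)
    simp only [f]
    ring
  have hev : ∀ᶠ t in 𝓝[>] (0:ℝ), (f A B C (M + t • w) - f A B C M) / t < 0 :=
    hsum.eventually_lt_const hneg
  obtain ⟨t, hlt, ht0⟩ := (hev.and self_mem_nhdsWithin).exists
  have ht0' : (0:ℝ) < t := ht0
  refine ⟨M + t • w, ?_⟩
  by_contra hge
  push_neg at hge
  have : 0 ≤ (f A B C (M + t • w) - f A B C M) / t := by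
    apply div_nonneg _ ht0'.le
    linarith
  linarith

lemma arccos_neg_half : Real.arccos (-(1/2)) = 2 * π / 3 := by
  have h1 : Real.cos (2 * π / 3) = -(1/2) := by
    have h : (2 * π / 3 : ℝ) = π - π / 3 := by ring
    rw [h, Real.cos_pi_sub, Real.cos_pi_div_three]
  rw [← h1, Real.arccos_cos (by positivity) (by nlinarith [Real.pi_pos])]

lemma cos_gt_of_angle_lt {x y : E} (h : InnerProductGeometry.angle x y < 2 * π / 3) :
    -(1/2) < Real.cos (InnerProductGeometry.angle x y) := by
  have h1 : Real.cos (2 * π / 3) = -(1/2) := by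
    have h : (2 * π / 3 : ℝ) = π - π / 3 := by ring
    rw [h, Real.cos_pi_sub, Real.cos_pi_div_three]
  rw [← h1]
  apply Real.strictAntiOn_cos
  · exact ⟨InnerProductGeometry.angle_nonneg x y, InnerProductGeometry.angle_le_pi x y⟩
  · constructor
    · nlinarith [Real.pi_pos]
    · nlinarith [Real.pi_pos]
  · exact h

/-- Descent at a vertex whose angle is less than `2π/3`. -/
lemma vertex_descent (A B C : E) (hAB : A ≠ B) (hAC : A ≠ C)
    (hangle : EuclideanGeometry.angle B A C < 2 * π / 3) :
    ∃ x, f A B C x < f A B C A := by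
  have hBA : B - A ≠ 0 := sub_ne_zero.2 (Ne.symm hAB)
  have hCA : C - A ≠ 0 := sub_ne_zero.2 (Ne.symm hAC)
  have hnBA : (0:ℝ) < ‖B - A‖ := norm_pos_iff.mpr hBA
  have hnCA : (0:ℝ) < ‖C - A‖ := norm_pos_iff.mpr hCA
  set u : E := ‖B - A‖⁻¹ • (B - A) with hu
  set v : E := ‖C - A‖⁻¹ • (C - A) with hv
  have hnu : ‖u‖ = 1 := by
    rw [hu, norm_smul, Real.norm_eq_abs, abs_of_pos (by positivity), inv_mul_cancel₀ hnBA.ne']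
  have hnv : ‖v‖ = 1 := by
    rw [hv, norm_smul, Real.norm_eq_abs, abs_of_pos (by positivity), inv_mul_cancel₀ hnCA.ne']
  have hangle' : InnerProductGeometry.angle (B - A) (C - A) < 2 * π / 3 := by
    have : EuclideanGeometry.angle B A C = InnerProductGeometry.angle (B - A) (C - A) := by
      rw [EuclideanGeometry.angle, vsub_eq_sub, vsub_eq_sub]
    rwa [this] at hangle
  have hcos := cos_gt_of_angle_lt hangle'
  rw [InnerProductGeometry.cos_angle] at hcos
  have huv : ⟪u, v⟫ = ⟪B - A, C - A⟫ / (‖B - A‖ * ‖C - A‖) := by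
    rw [hu, hv, real_inner_smul_left, real_inner_smul_right]
    field_simp
  have hcos' : -(1/2) < ⟪u, v⟫ := by rw [huv]; exact hcos
  set w : E := u + v with hw
  have hw2 : ‖w‖ ^ 2 = 2 + 2 * ⟪u, v⟫ := by
    rw [hw, norm_add_sq_real, hnu, hnv]; ring
  have hw1 : 1 < ‖w‖ := by nlinarith [norm_nonneg w]
  -- limits
  have hA' := tendsto_quot_self A w
  have hB' := tendsto_quot_ne A B w (Ne.symm hAB).symm
  have hC' := tendsto_quot_ne A C w (Ne.symm hAC).symm
  have hBu : ⟪B - A, u⟫ = ‖B - A‖ := by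
    rw [hu, real_inner_smul_right, real_inner_self_eq_norm_sq, pow_two, ← mul_assoc,
      inv_mul_cancel₀ hnBA.ne', one_mul]
  have hCv : ⟪C - A, v⟫ = ‖C - A‖ := by
    rw [hv, real_inner_smul_right, real_inner_self_eq_norm_sq, pow_two, ← mul_assoc,
      inv_mul_cancel₀ hnCA.ne', one_mul]
  have hBAu : (B - A) = ‖B - A‖ • u := by
    rw [hu, smul_smul, mul_inv_cancel₀ hnBA.ne', one_smul]
  have hCAv : (C - A) = ‖C - A‖ • v := by
    rw [hv, smul_smul, mul_inv_cancel₀ hnCA.ne', one_smul]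
  have hBv : ⟪B - A, v⟫ = ‖B - A‖ * ⟪u, v⟫ :=
    calc ⟪B - A, v⟫ = ⟪‖B - A‖ • u, v⟫ := by rw [← hBAu]
    _ = ‖B - A‖ * ⟪u, v⟫ := real_inner_smul_left _ _ _
  have hCu : ⟪C - A, u⟫ = ‖C - A‖ * ⟪u, v⟫ :=
    calc ⟪C - A, u⟫ = ⟪‖C - A‖ • v, u⟫ := by rw [← hCAv]
    _ = ‖C - A‖ * ⟪v, u⟫ := real_inner_smul_left _ _ _
    _ = ‖C - A‖ * ⟪u, v⟫ := by rw [real_inner_comm]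
  have hcB : ⟪A - B, w⟫ / dist A B = -(1 + ⟪u, v⟫) := by
    have hd : dist A B = ‖B - A‖ := by rw [dist_eq_norm, ← norm_neg]; congr 1; abel
    rw [hd, hw, inner_add_right]
    have h1 : ⟪A - B, u⟫ = -‖B - A‖ := by
      rw [show A - B = -(B - A) by abel, inner_neg_left, hBu]
    have h2 : ⟪A - B, v⟫ = -(‖B - A‖ * ⟪u, v⟫) := by
      rw [show A - B = -(B - A) by abel, inner_neg_left, hBv]
    rw [h1, h2, div_eq_iff hnBA.ne']
    ring
  have hcC : ⟪A - C, w⟫ / dist A C = -(1 + ⟪u, v⟫) := by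
    have hd : dist A C = ‖C - A‖ := by rw [dist_eq_norm, ← norm_neg]; congr 1; abel
    rw [hd, hw, inner_add_right]
    have h1 : ⟪A - C, v⟫ = -‖C - A‖ := by
      rw [show A - C = -(C - A) by abel, inner_neg_left, hCv]
    have h2 : ⟪A - C, u⟫ = -(‖C - A‖ * ⟪u, v⟫) := by
      rw [show A - C = -(C - A) by abel, inner_neg_left, hCu]
    rw [h1, h2, div_eq_iff hnCA.ne']
    ring
  rw [hcB] at hB'
  rw [hcC] at hC'
  exact descent hA' hB' hC' (by nlinarith)


section Units

variable (M P Q : E)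

/-- The unit vector pointing from `P` to `M`. -/
noncomputable def n (M P : E) : E := (dist M P)⁻¹ • (M - P)

lemma norm_n (h : M ≠ P) : ‖n M P‖ = 1 := by
  have hd : (0:ℝ) < dist M P := dist_pos.2 h
  rw [n, norm_smul, Real.norm_eq_abs, abs_of_pos (by positivity), dist_eq_norm,
    inv_mul_cancel₀ (by rw [← dist_eq_norm]; exact hd.ne')]

lemma smul_n (h : M ≠ P) : dist M P • n M P = M - P := by
  have hd : (0:ℝ) < dist M P := dist_pos.2 h
  rw [n, smul_smul, mul_inv_cancel₀ hd.ne', one_smul]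

lemma inner_n_self (h : M ≠ P) : ⟪n M P, M - P⟫ = dist M P := by
  have hd : (0:ℝ) < dist M P := dist_pos.2 h
  rw [n, real_inner_smul_left, real_inner_self_eq_norm_sq, ← dist_eq_norm, pow_two,
    ← mul_assoc, inv_mul_cancel₀ hd.ne', one_mul]

lemma inner_n_le (h : M ≠ P) (y : E) : ⟪n M P, y - P⟫ ≤ dist y P := by
  have h1 := real_inner_le_norm (n M P) (y - P)
  rwa [norm_n M P h, one_mul, ← dist_eq_norm] at h1

lemma ne_of_angle_eq {P M Q : E} (h : EuclideanGeometry.angle P M Q = 2 * π / 3) :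
    M ≠ P ∧ M ≠ Q := by
  constructor
  · rintro rfl
    simp only [EuclideanGeometry.angle, vsub_eq_sub, sub_self,
      InnerProductGeometry.angle_zero_left] at h
    nlinarith [Real.pi_pos]
  · rintro rfl
    simp only [EuclideanGeometry.angle, vsub_eq_sub, sub_self,
      InnerProductGeometry.angle_zero_right] at h
    nlinarith [Real.pi_pos]

lemma inner_n_of_angle {P M Q : E} (hMP : M ≠ P) (hMQ : M ≠ Q)
    (h : EuclideanGeometry.angle P M Q = 2 * π / 3) :
    ⟪n M P, n M Q⟫ = -(1/2) := by
  have hdP : (0:ℝ) < dist M P := dist_pos.2 hMP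
  have hdQ : (0:ℝ) < dist M Q := dist_pos.2 hMQ
  have hcos := congrArg Real.cos h
  rw [EuclideanGeometry.angle, vsub_eq_sub, vsub_eq_sub, InnerProductGeometry.cos_angle] at hcos
  have hc23 : Real.cos (2 * π / 3) = -(1/2) := by
    rw [show (2 * π / 3 : ℝ) = π - π / 3 by ring, Real.cos_pi_sub, Real.cos_pi_div_three]
  rw [hc23] at hcos
  have hPM : ⟪M - P, M - Q⟫ = ⟪P - M, Q - M⟫ := by
    rw [show M - P = -(P - M) by abel, show M - Q = -(Q - M) by abel, inner_neg_neg]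
  have hdP' : dist M P = ‖P - M‖ := by rw [dist_comm, dist_eq_norm]
  have hdQ' : dist M Q = ‖Q - M‖ := by rw [dist_comm, dist_eq_norm]
  rw [n, n, real_inner_smul_left, real_inner_smul_right, hPM, hdP', hdQ']
  rw [div_eq_iff (by rw [← hdP', ← hdQ']; positivity)] at hcos
  have hx : ‖P - M‖ ≠ 0 := by rw [← hdP']; exact hdP.ne'
  have hy : ‖Q - M‖ ≠ 0 := by rw [← hdQ']; exact hdQ.ne'
  rw [hcos]
  field_simp

lemma angle_of_inner_n {P M Q : E} (hMP : M ≠ P) (hMQ : M ≠ Q)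
    (h : ⟪n M P, n M Q⟫ = -(1/2)) :
    EuclideanGeometry.angle P M Q = 2 * π / 3 := by
  have hdP : (0:ℝ) < dist M P := dist_pos.2 hMP
  have hdQ : (0:ℝ) < dist M Q := dist_pos.2 hMQ
  have hPM : ⟪M - P, M - Q⟫ = ⟪P - M, Q - M⟫ := by
    rw [show M - P = -(P - M) by abel, show M - Q = -(Q - M) by abel, inner_neg_neg]
  have hdP' : dist M P = ‖P - M‖ := by rw [dist_comm, dist_eq_norm]
  have hdQ' : dist M Q = ‖Q - M‖ := by rw [dist_comm, dist_eq_norm]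
  rw [n, n, real_inner_smul_left, real_inner_smul_right, hPM, hdP', hdQ'] at h
  rw [EuclideanGeometry.angle, vsub_eq_sub, vsub_eq_sub, InnerProductGeometry.angle]
  have hq : ⟪P - M, Q - M⟫ / (‖P - M‖ * ‖Q - M‖) = -(1/2) := by
    rw [div_eq_iff (by rw [← hdP', ← hdQ']; positivity)]
    have h0P : (0:ℝ) < ‖P - M‖ := by rw [← hdP']; exact hdP
    have h0Q : (0:ℝ) < ‖Q - M‖ := by rw [← hdQ']; exact hdQ
    field_simp at h
    linarith [h]
  rw [hq, arccos_neg_half]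

/-- Three unit vectors with pairwise inner products `-1/2` sum to zero. -/
lemma sum_n_eq_zero {a b c : E} (ha : ‖a‖ = 1) (hb : ‖b‖ = 1) (hc : ‖c‖ = 1)
    (hab : ⟪a, b⟫ = -(1/2)) (hbc : ⟪b, c⟫ = -(1/2)) (hca : ⟪c, a⟫ = -(1/2)) :
    a + b + c = 0 := by
  have h1 : ‖a + b‖ ^ 2 = 1 := by rw [norm_add_sq_real, ha, hb, hab]; ring
  have h2 : ⟪a + b, c⟫ = -1 := by
    rw [inner_add_left, hbc, show ⟪a, c⟫ = ⟪c, a⟫ from real_inner_comm c a, hca]; ring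
  have h3 : ‖a + b + c‖ ^ 2 = 0 := by rw [norm_add_sq_real, h1, hc, h2]; ring
  have := norm_eq_zero.1 (pow_eq_zero_iff (n := 2) (by norm_num) |>.1 h3)
  exact this

/-- If the three unit vectors at `M` sum to zero then pairwise inners are `-1/2`. -/
lemma inner_of_sum_zero {a b c : E} (ha : ‖a‖ = 1) (hb : ‖b‖ = 1) (hc : ‖c‖ = 1)
    (hsum : a + b + c = 0) : ⟪a, b⟫ = -(1/2) := by
  have h : a + b = -c := by rw [eq_neg_iff_add_eq_zero]; exact hsum
  have h1 : ‖a + b‖ ^ 2 = 1 := by rw [h, norm_neg, hc]; norm_num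
  rw [norm_add_sq_real, ha, hb] at h1
  linarith

/-- A point where the three unit vectors sum to zero is a global minimizer of `f`. -/
lemma isGlobalMin_of_sum_zero {A B C M : E} (hMA : M ≠ A) (hMB : M ≠ B) (hMC : M ≠ C)
    (hsum : n M A + n M B + n M C = 0) (y : E) : f A B C M ≤ f A B C y := by
  have kA := inner_n_le M A hMA y
  have kB := inner_n_le M B hMB y
  have kC := inner_n_le M C hMC y
  have eA := inner_n_self M A hMA
  have eB := inner_n_self M B hMB
  have eC := inner_n_self M C hMC
  have hz : ⟪n M A + n M B + n M C, y - M⟫ = 0 := by rw [hsum, inner_zero_left]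
  rw [inner_add_left, inner_add_left] at hz
  have dA : ⟪n M A, y - A⟫ = ⟪n M A, y - M⟫ + ⟪n M A, M - A⟫ := by
    rw [← inner_add_right]; congr 1; abel
  have dB : ⟪n M B, y - B⟫ = ⟪n M B, y - M⟫ + ⟪n M B, M - B⟫ := by
    rw [← inner_add_right]; congr 1; abel
  have dC : ⟪n M C, y - C⟫ = ⟪n M C, y - M⟫ + ⟪n M C, M - C⟫ := by
    rw [← inner_add_right]; congr 1; abel
  simp only [f]
  rw [dA] at kA; rw [dB] at kB; rw [dC] at kC
  rw [eA] at kA; rw [eB] at kB; rw [eC] at kC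
  linarith

set_option maxHeartbeats 1000000 in
/-- Uniqueness: two points with the three `120°` angles coincide. -/
lemma eq_of_angles {A B C M M' : E}
    (h1 : EuclideanGeometry.angle A M B = 2 * π / 3)
    (h2 : EuclideanGeometry.angle B M C = 2 * π / 3)
    (h3 : EuclideanGeometry.angle C M A = 2 * π / 3)
    (h1' : EuclideanGeometry.angle A M' B = 2 * π / 3)
    (h2' : EuclideanGeometry.angle B M' C = 2 * π / 3)
    (h3' : EuclideanGeometry.angle C M' A = 2 * π / 3) : M = M' := by
  obtain ⟨hMA, hMB⟩ := ne_of_angle_eq h1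
  obtain ⟨hMC, hMA2⟩ := ne_of_angle_eq h3
  obtain ⟨hM'A, hM'B⟩ := ne_of_angle_eq h1'
  obtain ⟨hM'C, _⟩ := ne_of_angle_eq h3'
  have nAB := inner_n_of_angle hMA hMB h1
  have nBC := inner_n_of_angle hMB hMC h2
  have nCA := inner_n_of_angle hMC hMA h3
  have nAB' := inner_n_of_angle hM'A hM'B h1'
  have nBC' := inner_n_of_angle hM'B hM'C h2'
  have nCA' := inner_n_of_angle hM'C hM'A h3'
  have hS : n M A + n M B + n M C = 0 :=
    sum_n_eq_zero (norm_n M A hMA) (norm_n M B hMB) (norm_n M C hMC) nAB nBC nCA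
  have hS' : n M' A + n M' B + n M' C = 0 :=
    sum_n_eq_zero (norm_n M' A hM'A) (norm_n M' B hM'B) (norm_n M' C hM'C) nAB' nBC' nCA'
  have hle : f A B C M ≤ f A B C M' := isGlobalMin_of_sum_zero hMA hMB hMC hS M'
  have hge : f A B C M' ≤ f A B C M := isGlobalMin_of_sum_zero hM'A hM'B hM'C hS' M
  have heq : f A B C M' = f A B C M := le_antisymm hge hle
  -- equality analysis at M
  have kA := inner_n_le M A hMA M'
  have kB := inner_n_le M B hMB M'
  have kC := inner_n_le M C hMC M'
  have eA := inner_n_self M A hMA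
  have eB := inner_n_self M B hMB
  have eC := inner_n_self M C hMC
  have hz : ⟪n M A + n M B + n M C, M' - M⟫ = 0 := by rw [hS, inner_zero_left]
  rw [inner_add_left, inner_add_left] at hz
  have dA : ⟪n M A, M' - A⟫ = ⟪n M A, M' - M⟫ + ⟪n M A, M - A⟫ := by
    rw [← inner_add_right]; congr 1; abel
  have dB : ⟪n M B, M' - B⟫ = ⟪n M B, M' - M⟫ + ⟪n M B, M - B⟫ := by
    rw [← inner_add_right]; congr 1; abel
  have dC : ⟪n M C, M' - C⟫ = ⟪n M C, M' - M⟫ + ⟪n M C, M - C⟫ := by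
    rw [← inner_add_right]; congr 1; abel
  have heq' : f A B C M' = dist M' A + dist M' B + dist M' C := by simp [f]
  have hfM : f A B C M = dist M A + dist M B + dist M C := by simp [f]
  -- each inequality must be an equality
  have hEA : ⟪n M A, M' - A⟫ = dist M' A := by
    rw [dA, eA]; rw [dB, eB] at kB; rw [dC, eC] at kC
    rw [heq', hfM] at heq
    linarith
  have hEB : ⟪n M B, M' - B⟫ = dist M' B := by
    rw [dB, eB]; rw [dA, eA] at kA; rw [dC, eC] at kC
    rw [heq', hfM] at heq
    linarith
  -- Cauchy–Schwarz equality
  have hcsA : ⟪n M A, M' - A⟫ = ‖n M A‖ * ‖M' - A‖ := by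
    rw [norm_n M A hMA, one_mul, ← dist_eq_norm]; exact hEA
  have hcsB : ⟪n M B, M' - B⟫ = ‖n M B‖ * ‖M' - B‖ := by
    rw [norm_n M B hMB, one_mul, ← dist_eq_norm]; exact hEB
  have hrA : M' - A = ‖M' - A‖ • n M A := by
    have := inner_eq_norm_mul_iff_real.1 hcsA
    rw [norm_n M A hMA, one_smul] at this
    exact this.symm
  have hrB : M' - B = ‖M' - B‖ • n M B := by
    have := inner_eq_norm_mul_iff_real.1 hcsB
    rw [norm_n M B hMB, one_smul] at this
    exact this.symm
  have hMA' : M - A = dist M A • n M A := (smul_n M A hMA).symm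
  have hMB' : M - B = dist M B • n M B := (smul_n M B hMB).symm
  have hdiffA : M' - M = (‖M' - A‖ - dist M A) • n M A := by
    rw [sub_smul, ← hrA, ← hMA']; abel
  have hdiffB : M' - M = (‖M' - B‖ - dist M B) • n M B := by
    rw [sub_smul, ← hrB, ← hMB']; abel
  set s := ‖M' - A‖ - dist M A with hs
  set t := ‖M' - B‖ - dist M B with ht
  have hst : s • n M A = t • n M B := by rw [← hdiffA, ← hdiffB]
  have hnAA : ⟪n M A, n M A⟫ = 1 := by
    rw [real_inner_self_eq_norm_sq, norm_n M A hMA]; norm_num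
  have hnBB : ⟪n M B, n M B⟫ = 1 := by
    rw [real_inner_self_eq_norm_sq, norm_n M B hMB]; norm_num
  have hBA : ⟪n M B, n M A⟫ = -(1/2) := by
    rw [show ⟪n M B, n M A⟫ = ⟪n M A, n M B⟫ from real_inner_comm _ _]; exact nAB
  have i1 : s * 1 = t * (-(1/2)) := by
    have h := congrArg (fun z => ⟪z, n M A⟫) hst
    simp only [real_inner_smul_left] at h
    rw [hnAA, hBA] at h
    exact h
  have i2 : s * (-(1/2)) = t * 1 := by
    have h := congrArg (fun z => ⟪z, n M B⟫) hst
    simp only [real_inner_smul_left] at h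
    rw [hnBB, nAB] at h
    exact h
  rw [mul_one] at i1 i2
  have hs0 : s = 0 := by linarith
  have : M' - M = 0 := by rw [hdiffA, hs0, zero_smul]
  exact (sub_eq_zero.1 this).symm

/-- Descent at a non-vertex point where the unit vectors do not sum to zero. -/
lemma interior_descent {A B C M : E} (hMA : M ≠ A) (hMB : M ≠ B) (hMC : M ≠ C)
    (hS : n M A + n M B + n M C ≠ 0) :
    ∃ x, f A B C x < f A B C M := by
  set S := n M A + n M B + n M C with hSdef
  have hA' := tendsto_quot_ne M A (-S) hMA
  have hB' := tendsto_quot_ne M B (-S) hMB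
  have hC' := tendsto_quot_ne M C (-S) hMC
  have key : ∀ P : E, M ≠ P → ⟪M - P, -S⟫ / dist M P = -⟪n M P, S⟫ := by
    intro P hP
    have hd : (0:ℝ) < dist M P := dist_pos.2 hP
    rw [← smul_n M P hP, inner_neg_right, real_inner_smul_left]
    field_simp
  rw [key A hMA] at hA'
  rw [key B hMB] at hB'
  rw [key C hMC] at hC'
  apply descent hA' hB' hC'
  have hpos : (0:ℝ) < ⟪S, S⟫ := by
    have h0 : (0:ℝ) < ‖S‖ := norm_pos_iff.2 hS
    rw [real_inner_self_eq_norm_sq]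
    positivity
  have hexp : ⟪S, S⟫ = ⟪n M A, S⟫ + ⟪n M B, S⟫ + ⟪n M C, S⟫ := by
    rw [hSdef, inner_add_left, inner_add_left]
  linarith

end Units

end FermatAux

open FermatAux

theorem fermat_point_exists_unique (A B C : EuclideanSpace ℝ (Fin 2))
    (hABC : AffineIndependent ℝ ![A, B, C])
    (hA : ∠ B A C < 2 * Real.pi / 3)
    (hB : ∠ A B C < 2 * Real.pi / 3)
    (hC : ∠ B C A < 2 * Real.pi / 3) :
    ∃! M : EuclideanSpace ℝ (Fin 2),
      M ∈ interior (convexHull ℝ {A, B, C}) ∧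
      ∠ A M B = 2 * Real.pi / 3 ∧ ∠ B M C = 2 * Real.pi / 3 ∧
      ∠ C M A = 2 * Real.pi / 3 := by
  classical
  have hinj := hABC.injective
  have hAB : A ≠ B := by
    intro h
    exact absurd (hinj (show ![A,B,C] 0 = ![A,B,C] 1 by simpa using h)) (by decide)
  have hAC : A ≠ C := by
    intro h
    exact absurd (hinj (show ![A,B,C] 0 = ![A,B,C] 2 by simpa using h)) (by decide)
  have hBC : B ≠ C := by
    intro h
    exact absurd (hinj (show ![A,B,C] 1 = ![A,B,C] 2 by simpa using h)) (by decide)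
  -- existence of a global minimizer of `f A B C`
  have hcont : Continuous (f A B C) := by
    show Continuous fun x => dist x A + dist x B + dist x C
    exact ((continuous_id.dist continuous_const).add
      (continuous_id.dist continuous_const)).add (continuous_id.dist continuous_const)
  have hcoer : Filter.Tendsto (f A B C) (Filter.cocompact _) Filter.atTop := by
    apply Filter.tendsto_atTop_mono _ (tendsto_dist_right_cocompact_atTop A)
    intro x
    have h1 := dist_nonneg (x := x) (y := B)
    have h2 := dist_nonneg (x := x) (y := C)
    simp only [f]
    linarith
  obtain ⟨M, hM⟩ := hcont.exists_forall_le' A (hcoer.eventually_ge_atTop (f A B C A))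
  have hfperm1 : ∀ x, f B A C x = f A B C x := fun x => by simp only [f]; ring
  have hfperm2 : ∀ x, f C B A x = f A B C x := fun x => by simp only [f]; ring
  -- the minimizer is not a vertex
  have hMA : M ≠ A := by
    rintro rfl
    obtain ⟨x, hx⟩ := vertex_descent M B C hAB hAC hA
    exact absurd hx (not_lt.2 (hM x))
  have hMB : M ≠ B := by
    rintro rfl
    obtain ⟨x, hx⟩ := vertex_descent M A C hAB.symm hBC hB
    rw [hfperm1 x, hfperm1 M] at hx
    exact absurd hx (not_lt.2 (hM x))
  have hMC : M ≠ C := by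
    rintro rfl
    obtain ⟨x, hx⟩ := vertex_descent M B A hBC.symm hAC.symm hC
    rw [hfperm2 x, hfperm2 M] at hx
    exact absurd hx (not_lt.2 (hM x))
  -- the unit vectors sum to zero
  have hS : n M A + n M B + n M C = 0 := by
    by_contra hS
    obtain ⟨x, hx⟩ := interior_descent hMA hMB hMC hS
    exact absurd hx (not_lt.2 (hM x))
  have nAB : (inner ℝ (n M A) (n M B) : ℝ) = -(1/2) :=
    inner_of_sum_zero (norm_n M A hMA) (norm_n M B hMB) (norm_n M C hMC) hS
  have nBC : (inner ℝ (n M B) (n M C) : ℝ) = -(1/2) :=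
    inner_of_sum_zero (norm_n M B hMB) (norm_n M C hMC) (norm_n M A hMA)
      (by rw [← hS]; abel)
  have nCA : (inner ℝ (n M C) (n M A) : ℝ) = -(1/2) :=
    inner_of_sum_zero (norm_n M C hMC) (norm_n M A hMA) (norm_n M B hMB)
      (by rw [← hS]; abel)
  have ang1 : ∠ A M B = 2 * Real.pi / 3 := angle_of_inner_n hMA hMB nAB
  have ang2 : ∠ B M C = 2 * Real.pi / 3 := angle_of_inner_n hMB hMC nBC
  have ang3 : ∠ C M A = 2 * Real.pi / 3 := angle_of_inner_n hMC hMA nCA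
  -- interior membership
  have hdA : (0:ℝ) < dist M A := dist_pos.2 hMA
  have hdB : (0:ℝ) < dist M B := dist_pos.2 hMB
  have hdC : (0:ℝ) < dist M C := dist_pos.2 hMC
  have hfin : Fintype.card (Fin 3) = Module.finrank ℝ (EuclideanSpace ℝ (Fin 2)) + 1 := by
    simp [finrank_euclideanSpace_fin]
  have htop : affineSpan ℝ (Set.range ![A,B,C]) = ⊤ :=
    hABC.affineSpan_eq_top_iff_card_eq_finrank_add_one.2 hfin
  let b : AffineBasis (Fin 3) ℝ (EuclideanSpace ℝ (Fin 2)) := ⟨![A,B,C], hABC, htop⟩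
  have hbfun : ⇑b = ![A,B,C] := rfl
  have hrange : Set.range ⇑b = {A, B, C} := by
    rw [hbfun]
    ext x
    constructor
    · rintro ⟨i, rfl⟩
      fin_cases i <;> simp
    · intro hx
      simp only [Set.mem_insert_iff, Set.mem_singleton_iff] at hx
      rcases hx with rfl | rfl | rfl
      exacts [⟨0, by simp⟩, ⟨1, by simp⟩, ⟨2, by simp⟩]
  set σ : ℝ := (dist M A)⁻¹ + (dist M B)⁻¹ + (dist M C)⁻¹ with hσdef
  have hσ : (0:ℝ) < σ := by rw [hσdef]; positivity
  set wf : Fin 3 → ℝ := ![σ⁻¹ * (dist M A)⁻¹, σ⁻¹ * (dist M B)⁻¹, σ⁻¹ * (dist M C)⁻¹]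
    with hwf
  have hw1 : ∑ i, wf i = 1 := by
    rw [hwf, Fin.sum_univ_three]
    simp only [Matrix.cons_val_zero, Matrix.cons_val_one, Matrix.head_cons,
      Matrix.cons_val_two, Matrix.tail_cons]
    have h : σ⁻¹ * (dist M A)⁻¹ + σ⁻¹ * (dist M B)⁻¹ + σ⁻¹ * (dist M C)⁻¹ = σ⁻¹ * σ := by
      rw [hσdef]; ring
    rw [h, inv_mul_cancel₀ hσ.ne']
  have hS2 : σ • M = (dist M A)⁻¹ • A + (dist M B)⁻¹ • B + (dist M C)⁻¹ • C := by
    have h' := hS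
    simp only [n, smul_sub] at h'
    have h2 : (dist M A)⁻¹ • M + (dist M B)⁻¹ • M + (dist M C)⁻¹ • M -
        ((dist M A)⁻¹ • A + (dist M B)⁻¹ • B + (dist M C)⁻¹ • C) = 0 := by
      rw [← h']; abel
    have h3 := sub_eq_zero.1 h2
    rw [hσdef, add_smul, add_smul]
    exact h3
  have hcomb : Finset.univ.affineCombination ℝ (⇑b) wf = M := by
    rw [Finset.affineCombination_eq_linear_combination _ _ _ hw1, hbfun, hwf,
      Fin.sum_univ_three]
    simp only [Matrix.cons_val_zero, Matrix.cons_val_one, Matrix.head_cons,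
      Matrix.cons_val_two, Matrix.tail_cons]
    have h3 : σ⁻¹ • (σ • M) = σ⁻¹ • ((dist M A)⁻¹ • A + (dist M B)⁻¹ • B +
        (dist M C)⁻¹ • C) := by rw [hS2]
    rw [smul_smul, inv_mul_cancel₀ hσ.ne', one_smul, smul_add, smul_add, smul_smul,
      smul_smul, smul_smul] at h3
    exact h3.symm
  have hint : M ∈ interior (convexHull ℝ ({A, B, C} : Set (EuclideanSpace ℝ (Fin 2)))) := by
    rw [← hrange, b.interior_convexHull]
    intro i
    have hcoord : b.coord i M = wf i := by
      rw [← hcomb]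
      exact b.coord_apply_combination_of_mem (Finset.mem_univ i) hw1
    rw [hcoord]
    fin_cases i
    · exact mul_pos (inv_pos.2 hσ) (inv_pos.2 hdA)
    · exact mul_pos (inv_pos.2 hσ) (inv_pos.2 hdB)
    · exact mul_pos (inv_pos.2 hσ) (inv_pos.2 hdC)
  refine ⟨M, ⟨hint, ang1, ang2, ang3⟩, ?_⟩
  rintro y ⟨-, hy1, hy2, hy3⟩
  exact eq_of_angles hy1 hy2 hy3 ang1 ang2 ang3
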